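/- Let N > 0, Q > 0, ū ≥ 0, V₁ > ū with Q < N/(V₁ − ū), and let α satisfy 0 < α < 1 − √((V₁ − ū)Q/N). For p ∈ [0, V₁ − ū], define l(p) = N·p·( √((V₁ − ū − p)Q/N) + (1 − √(1 − 3α√((V₁ − ū − p)Q/N)))² / (9α) ). Then the expressions under all square roots are nonnegative on [0, V₁ − ū], and there exists p′ with 0 ≤ p′ < (2/3)(V₁ − ū) such that l(p′) > l((2/3)(V₁ − ū)). -/

import Mathlib

/-- Key step in the proof of Proposition 9 (Appendix F): with small 5G capacity
`Q < N/(V₁ − ū)` and small per-AP WiFi coverage `α < 1 − √((V₁ − ū)Q/N)`, the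
profit lower bound `l(p)` is well defined (all square-root arguments are
nonnegative on `[0, V₁ − ū]`) and there is a price `p′ < (2/3)(V₁ − ū)` with
`l(p′) > l((2/3)(V₁ − ū))`. -/
theorem stmt_16 (N Q ubar V₁ α : ℝ) (l : ℝ → ℝ)
    (hN : 0 < N) (hQ : 0 < Q) (hubar : 0 ≤ ubar) (hV : ubar < V₁)
    (hQsmall : Q < N / (V₁ - ubar))
    (hα₀ : 0 < α) (hαsmall : α < 1 - Real.sqrt ((V₁ - ubar) * Q / N))
    (hl : ∀ p, l p = N * p * (Real.sqrt ((V₁ - ubar - p) * Q / N)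
      + (1 - Real.sqrt (1 - 3 * α * Real.sqrt ((V₁ - ubar - p) * Q / N))) ^ 2
        / (9 * α))) :
    (∀ p ∈ Set.Icc (0 : ℝ) (V₁ - ubar),
      0 ≤ (V₁ - ubar - p) * Q / N ∧
      0 ≤ 1 - 3 * α * Real.sqrt ((V₁ - ubar - p) * Q / N)) ∧
    ∃ p' : ℝ, 0 ≤ p' ∧ p' < (2 / 3) * (V₁ - ubar) ∧
      l ((2 / 3) * (V₁ - ubar)) < l p' := by

  set v : ℝ := V₁ - ubar with hvdef
  have hv : 0 < v := by simp only [hvdef]; linarith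
  set S : ℝ := Real.sqrt (v * Q / N) with hSdef
  have hSnn : 0 ≤ S := Real.sqrt_nonneg _
  have hS1 : S < 1 := by linarith
  have key : ∀ p ∈ Set.Icc (0:ℝ) v,
      0 ≤ (v - p) * Q / N ∧ 1/4 ≤ 1 - 3 * α * Real.sqrt ((v - p) * Q / N) := by
    intro p hp
    obtain ⟨hp0, hpv⟩ := hp
    have hx : 0 ≤ (v - p) * Q / N :=
      div_nonneg (mul_nonneg (by linarith) hQ.le) hN.le
    refine ⟨hx, ?_⟩
    have htS : Real.sqrt ((v - p) * Q / N) ≤ S := by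
      rw [hSdef]
      apply Real.sqrt_le_sqrt
      gcongr
      linarith
    have htnn : 0 ≤ Real.sqrt ((v - p) * Q / N) := Real.sqrt_nonneg _
    set t := Real.sqrt ((v - p) * Q / N)
    have h1 : 3 * α * t ≤ 3 * α * S := by nlinarith
    have h2 : 3 * α * S ≤ 3 * S * (1 - S) := by
      nlinarith [mul_nonneg hSnn (by linarith : (0:ℝ) ≤ 1 - S - α)]
    nlinarith [sq_nonneg (S - 1/2)]
  constructor
  · intro p hp
    obtain ⟨h1, h2⟩ := key p hp
    exact ⟨h1, by linarith⟩
  -- Part 2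
  have hp₀pos : 0 < (2/3) * v := by positivity
  set p₀ : ℝ := (2/3) * v with hp₀def
  have hp₀mem : p₀ ∈ Set.Icc (0:ℝ) v := ⟨hp₀pos.le, by rw [hp₀def]; nlinarith⟩
  have hx₀pos : 0 < (v - p₀) * Q / N := by
    apply div_pos (mul_pos ?_ hQ) hN
    rw [hp₀def]; nlinarith
  have hw₀' := (key p₀ hp₀mem).2
  set s₀ : ℝ := Real.sqrt ((v - p₀) * Q / N) with hs₀def
  have hs₀pos : 0 < s₀ := Real.sqrt_pos.mpr hx₀pos
  have hs₀sq : s₀ ^ 2 = (v - p₀) * Q / N := Real.sq_sqrt hx₀pos.le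
  have hw₀pos : 0 < 1 - 3 * α * s₀ := by linarith
  set r₀ : ℝ := Real.sqrt (1 - 3 * α * s₀) with hr₀def
  have hr₀pos : 0 < r₀ := Real.sqrt_pos.mpr hw₀pos
  have hr₀sq : r₀ ^ 2 = 1 - 3 * α * s₀ := Real.sq_sqrt hw₀pos.le
  have hr₀lt1 : r₀ < 1 := by
    nlinarith [mul_pos (mul_pos hα₀ hs₀pos) hr₀pos]
  -- useful algebraic fact
  have hQv : v * Q = 3 * N * s₀ ^ 2 := by
    rw [hs₀sq, hp₀def]
    field_simp
    ring
  -- derivative pieces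
  have hx : HasDerivAt (fun p : ℝ => (v - p) * Q / N) (-(Q/N)) p₀ := by
    have h := (((hasDerivAt_id p₀).const_sub v).mul_const Q).div_const N
    refine h.congr_deriv (Eq.symm ?_)
    ring
  have hs : HasDerivAt (fun p : ℝ => Real.sqrt ((v - p) * Q / N)) (-(Q/N)/(2*s₀)) p₀ := by
    have h := (Real.hasDerivAt_sqrt (ne_of_gt hx₀pos)).comp p₀ hx
    refine h.congr_deriv (Eq.symm ?_)
    rw [← hs₀def]
    ring
  have hw : HasDerivAt (fun p : ℝ => 1 - 3 * α * Real.sqrt ((v - p) * Q / N))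
      (-(3 * α * (-(Q/N)/(2*s₀)))) p₀ := (hs.const_mul (3*α)).const_sub 1
  have hr : HasDerivAt (fun p : ℝ => Real.sqrt (1 - 3 * α * Real.sqrt ((v - p) * Q / N)))
      (1 / (2 * r₀) * (-(3 * α * (-(Q/N)/(2*s₀))))) p₀ := by
    have h := (Real.hasDerivAt_sqrt (ne_of_gt hw₀pos)).comp p₀ hw
    rw [← hr₀def] at h
    exact h
  have hφ : HasDerivAt (fun p : ℝ =>
      (1 - Real.sqrt (1 - 3 * α * Real.sqrt ((v - p) * Q / N))) ^ 2)
      (2 * (1 - r₀) * (-(1 / (2 * r₀) * (-(3 * α * (-(Q/N)/(2*s₀))))))) p₀ := by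
    have h := ((hr.const_sub 1).pow 2)
    rw [← hs₀def, ← hr₀def] at h
    refine h.congr_deriv (Eq.symm ?_)
    push_cast
    ring
  set f : ℝ → ℝ := fun p => N * p * (Real.sqrt ((v - p) * Q / N)
      + (1 - Real.sqrt (1 - 3 * α * Real.sqrt ((v - p) * Q / N))) ^ 2 / (9 * α)) with hfdef
  have hNp : HasDerivAt (fun p : ℝ => N * p) N p₀ := by
    simpa using (hasDerivAt_id p₀).const_mul N
  have h := hNp.mul (hs.add (hφ.div_const (9*α)))
  beta_reduce at h
  simp only [Pi.add_apply] at h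
  rw [← hs₀def, ← hr₀def] at h
  clear_value s₀ r₀
  have hD : HasDerivAt f (-(N * (1 - r₀)^2 / (9 * α * r₀))) p₀ := by
    refine h.congr_deriv (Eq.symm ?_)
    have hNe : N ≠ 0 := hN.ne'
    have hαe : α ≠ 0 := hα₀.ne'
    have hse : s₀ ≠ 0 := hs₀pos.ne'
    have hre : r₀ ≠ 0 := hr₀pos.ne'
    have hve : v ≠ 0 := hv.ne'
    have hQe : Q = 3 * N * s₀ ^ 2 / v := by
      field_simp
      linarith [hQv]
    rw [hQe, hp₀def]
    field_simp
    ring_nf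
    linear_combination (1 - r₀) * hr₀sq
  have hDneg : -(N * (1 - r₀)^2 / (9 * α * r₀)) < 0 := by
    have h1 : 0 < (1 - r₀)^2 := pow_pos (by linarith) 2
    have h2 : 0 < N * (1 - r₀)^2 / (9 * α * r₀) :=
      div_pos (mul_pos hN h1) (by positivity)
    linarith
  have hslope := hasDerivAt_iff_tendsto_slope.mp hD
  have hev1 : {p | slope f p₀ p < 0} ∈ nhdsWithin p₀ {p₀}ᶜ :=
    hslope (Iio_mem_nhds hDneg)
  have hle : nhdsWithin p₀ (Set.Iio p₀) ≤ nhdsWithin p₀ {p₀}ᶜ :=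
    nhdsWithin_mono p₀ (fun x hx => ne_of_lt hx)
  have hev2 : {p | slope f p₀ p < 0} ∈ nhdsWithin p₀ (Set.Iio p₀) := hle hev1
  have hev3 : Set.Ioo (0:ℝ) p₀ ∈ nhdsWithin p₀ (Set.Iio p₀) :=
    Ioo_mem_nhdsLT_of_mem ⟨hp₀pos, le_refl _⟩
  have hne : ({p | slope f p₀ p < 0} ∩ Set.Ioo 0 p₀).Nonempty :=
    Filter.nonempty_of_mem (Filter.inter_mem hev2 hev3)
  obtain ⟨p', hsl, hp'0, hp'lt⟩ := hne
  refine ⟨p', hp'0.le, hp'lt, ?_⟩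
  simp only [Set.mem_setOf_eq] at hsl
  have hsl' : (f p' - f p₀) / (p' - p₀) < 0 := by
    rwa [slope_def_field] at hsl
  have hgt : f p₀ < f p' := by
    rcases div_neg_iff.mp hsl' with ⟨h1, h2⟩ | ⟨h1, h2⟩
    · linarith
    · linarith
  rw [hl, hl]
  exact hgt
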